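/- Let X be a real N×D matrix, Y a real N×M matrix, and λ > 0, and let W = (XᵀX + λI)⁻¹ Xᵀ Y be the ridge regression weight matrix. Then the largest singular value of W is at most the largest singular value of Y divided by 2√λ, i.e., ‖W‖ ≤ ‖Y‖/(2√λ) in the L2 operator norm. -/

import Mathlib

open scoped Matrix.Norms.L2Operator

open Matrix in
private lemma ridge_inner_eq_dot {n : ℕ} (u v : Fin n → ℝ) :
    (inner ℝ ((WithLp.equiv 2 (Fin n → ℝ)).symm u) ((WithLp.equiv 2 (Fin n → ℝ)).symm v) : ℝ)
      = u ⬝ᵥ v := by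
  simp [PiLp.inner_apply, dotProduct, RCLike.inner_apply, mul_comm]

private lemma ridge_scalar {a b c s : ℝ} (ha : 0 ≤ a) (hb : 0 ≤ b) (hc : 0 ≤ c)
    (hs : 0 < s) (h : a ^ 2 + s ^ 2 * b ^ 2 ≤ a * c) : b ≤ c / (2 * s) := by
  rcases eq_or_lt_of_le ha with h0 | h0
  · have hb0 : b = 0 := by
      by_contra hne
      have hbpos : 0 < b := lt_of_le_of_ne hb (Ne.symm hne)
      nlinarith [mul_pos (mul_pos hs hs) (mul_pos hbpos hbpos)]
    rw [hb0]; positivity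
  · rw [le_div_iff₀ (by positivity)]
    nlinarith [sq_nonneg (a - s * b)]

open Matrix in
/-- **Ridge regression singular value bound.**
For real matrices `X : N × D` and `Y : N × M` and any `λ > 0`, the ridge regression
weight matrix `W = (Xᵀ X + λ I)⁻¹ Xᵀ Y` satisfies `‖W‖ ≤ ‖Y‖ / (2 √λ)`, where `‖·‖`
denotes the `L2` operator norm (the largest singular value). -/
theorem ridge_regression_opNorm_bound
    {N D M : ℕ} (X : Matrix (Fin N) (Fin D) ℝ) (Y : Matrix (Fin N) (Fin M) ℝ)
    (lam : ℝ) (hlam : 0 < lam) :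
    ‖(Xᵀ * X + lam • (1 : Matrix (Fin D) (Fin D) ℝ))⁻¹ * Xᵀ * Y‖ ≤
      ‖Y‖ / (2 * Real.sqrt lam) := by
  set A := Xᵀ * X + lam • (1 : Matrix (Fin D) (Fin D) ℝ) with hAdef
  have hs : 0 < Real.sqrt lam := Real.sqrt_pos.mpr hlam
  -- A is positive definite
  have hsemi : (Xᵀ * X).PosSemidef := by
    have := Matrix.posSemidef_conjTranspose_mul_self X
    rwa [Matrix.conjTranspose_eq_transpose_of_trivial] at this
  have hApd : A.PosDef := by
    refine Matrix.PosDef.posSemidef_add hsemi ?_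
    rw [Matrix.smul_one_eq_diagonal]
    exact Matrix.posDef_diagonal_iff.mpr fun _ => hlam
  have hinv : A * A⁻¹ = 1 := Matrix.mul_nonsing_inv A hApd.det_pos.ne'.isUnit
  -- the operator norm bound for B = A⁻¹ * Xᵀ
  have hB : ‖A⁻¹ * Xᵀ‖ ≤ 1 / (2 * Real.sqrt lam) := by
    rw [Matrix.l2_opNorm_def]
    refine ContinuousLinearMap.opNorm_le_bound _ (by positivity) fun x => ?_
    simp only [LinearEquiv.trans_apply, LinearMap.coe_toContinuousLinearMap',
      Matrix.toEuclideanLin_apply]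
    set v : Fin N → ℝ := (WithLp.equiv 2 (Fin N → ℝ)) x with hv
    set w : Fin D → ℝ := (A⁻¹ * Xᵀ) *ᵥ v with hw
    set u : Fin N → ℝ := X *ᵥ w with hu
    have h1 : A *ᵥ w = Xᵀ *ᵥ v := by
      rw [hw, Matrix.mulVec_mulVec, ← Matrix.mul_assoc, hinv, Matrix.one_mul]
    have h2 : u ⬝ᵥ u + lam * (w ⬝ᵥ w) = u ⬝ᵥ v := by
      have e1 : w ⬝ᵥ (A *ᵥ w) = u ⬝ᵥ u + lam * (w ⬝ᵥ w) := by
        rw [hAdef, Matrix.add_mulVec, dotProduct_add, Matrix.smul_mulVec,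
          Matrix.one_mulVec, dotProduct_smul, smul_eq_mul]
        congr 1
        rw [← Matrix.mulVec_mulVec, Matrix.dotProduct_mulVec, Matrix.vecMul_transpose, ← hu,
          dotProduct_comm]
      have e2 : w ⬝ᵥ (A *ᵥ w) = u ⬝ᵥ v := by
        rw [h1, Matrix.dotProduct_mulVec, Matrix.vecMul_transpose, ← hu]
      rw [← e1, e2]
    -- translate to Euclidean norms
    set a := ‖(WithLp.equiv 2 (Fin N → ℝ)).symm u‖ with ha
    set b := ‖(WithLp.equiv 2 (Fin D → ℝ)).symm w‖ with hb
    have huu : u ⬝ᵥ u = a ^ 2 := by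
      rw [← ridge_inner_eq_dot, real_inner_self_eq_norm_sq]
    have hww : w ⬝ᵥ w = b ^ 2 := by
      rw [← ridge_inner_eq_dot, real_inner_self_eq_norm_sq]
    have hxv : (WithLp.equiv 2 (Fin N → ℝ)).symm v = x := by
      rw [hv]; exact (WithLp.equiv 2 (Fin N → ℝ)).symm_apply_apply x
    have huv : u ⬝ᵥ v ≤ a * ‖x‖ := by
      rw [← ridge_inner_eq_dot, hxv]
      exact real_inner_le_norm _ _
    have key : a ^ 2 + Real.sqrt lam ^ 2 * b ^ 2 ≤ a * ‖x‖ := by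
      rw [Real.sq_sqrt hlam.le]
      calc a ^ 2 + lam * b ^ 2 = u ⬝ᵥ u + lam * (w ⬝ᵥ w) := by rw [huu, hww]
        _ = u ⬝ᵥ v := h2
        _ ≤ a * ‖x‖ := huv
    have hbound : b ≤ ‖x‖ / (2 * Real.sqrt lam) :=
      ridge_scalar (norm_nonneg _) (norm_nonneg _) (norm_nonneg _) hs key
    have heq : ‖x‖ / (2 * Real.sqrt lam) = 1 / (2 * Real.sqrt lam) * ‖x‖ := by ring
    rw [← heq]
    exact hbound
  calc ‖A⁻¹ * Xᵀ * Y‖ ≤ ‖A⁻¹ * Xᵀ‖ * ‖Y‖ := Matrix.l2_opNorm_mul _ Y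
    _ ≤ 1 / (2 * Real.sqrt lam) * ‖Y‖ := by
        exact mul_le_mul_of_nonneg_right hB (norm_nonneg Y)
    _ = ‖Y‖ / (2 * Real.sqrt lam) := by ring
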